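/- Let d ≥ 2 and A ⊂ ℝ^d. Define ∠A as the supremum over triples x, y, z ∈ A (with x ≠ y, z ≠ y) of the angle ∠xyz at the vertex y. If ∠A < arccos(-1/d), then no point of A lies in the convex hull of the other points of A; equivalently, A is in convex position. -/

import Mathlib

open EuclideanGeometry

/-- If every angle formed by points of `A ⊆ ℝ^d` is at most some `θ < arccos(-1/d)`, then
no point of `A` lies in the convex hull of the other points: `A` is in convex position. -/
theorem convex_position_of_angle_lt
    (d : ℕ) (hd : 2 ≤ d)
    (A : Set (EuclideanSpace ℝ (Fin d)))
    (θ : ℝ) (hθ : θ < Real.arccos (-(1 / (d : ℝ))))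
    (hang : ∀ x ∈ A, ∀ y ∈ A, ∀ z ∈ A, x ≠ y → z ≠ y →
      EuclideanGeometry.angle x y z ≤ θ) :
    ∀ a ∈ A, a ∉ convexHull ℝ (A \ {a}) := by
  intro a ha hmem
  classical
  obtain ⟨ι, hι, z, w, hzA, hai, hwpos, hw1, hzw⟩ :=
    eq_pos_convex_span_of_mem_convexHull hmem
  -- d as a real
  have hdpos : (0:ℝ) < (d:ℝ) := by
    have : 0 < d := by omega
    exact_mod_cast this
  -- cardinality bound from affine independence
  have hcard : Fintype.card ι ≤ d + 1 := by
    have h1 : Fintype.card ι ≤ Module.finrank ℝ (vectorSpan ℝ (Set.range z)) + 1 :=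
      hai.card_le_finrank_succ
    have h2 : Module.finrank ℝ (vectorSpan ℝ (Set.range z)) ≤ d := by
      have h3 := Submodule.finrank_le (vectorSpan ℝ (Set.range z))
      simpa [finrank_euclideanSpace_fin] using h3
    exact h1.trans (Nat.succ_le_succ h2)
  set v : ι → EuclideanSpace ℝ (Fin d) := fun i => z i - a with hv
  have hzA' : ∀ i, z i ∈ A := fun i => (hzA (Set.mem_range_self i)).1
  have hzne : ∀ i, z i ≠ a := fun i => fun h =>
    (hzA (Set.mem_range_self i)).2 (by simp [h])
  have hvne : ∀ i, v i ≠ 0 := fun i => sub_ne_zero.2 (hzne i)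
  have hvnorm : ∀ i, (0:ℝ) < ‖v i‖ := fun i => norm_pos_iff.2 (hvne i)
  -- nonempty index type
  rcases isEmpty_or_nonempty ι with hempty | hne
  · simp at hw1
  -- the key inner product bound
  have hcos : ∀ i j : ι,
      -(1 / (d:ℝ)) * (‖v i‖ * ‖v j‖) < inner ℝ (v i) (v j) := by
    intro i j
    have hangle : EuclideanGeometry.angle (z i) a (z j) ≤ θ :=
      hang (z i) (hzA' i) a ha (z j) (hzA' j) (hzne i) (hzne j)
    have heq : EuclideanGeometry.angle (z i) a (z j)
        = InnerProductGeometry.angle (v i) (v j) := by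
      simp [EuclideanGeometry.angle, hv, vsub_eq_sub]
    have harange : -1 ≤ -(1 / (d:ℝ)) ∧ -(1 / (d:ℝ)) ≤ 1 := by
      constructor
      · have h4 : (1:ℕ) ≤ d := by omega
        have : (1 / (d:ℝ)) ≤ 1 := by
          rw [div_le_one hdpos]; exact_mod_cast h4
        linarith
      · have : (0:ℝ) < 1 / (d:ℝ) := by positivity
        linarith
    have hlt : InnerProductGeometry.angle (v i) (v j)
        < Real.arccos (-(1 / (d:ℝ))) := by
      rw [← heq]; exact lt_of_le_of_lt hangle hθ
    have hcoslt : -(1 / (d:ℝ)) < Real.cos (InnerProductGeometry.angle (v i) (v j)) := by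
      have h1 : InnerProductGeometry.angle (v i) (v j) ∈ Set.Icc 0 Real.pi :=
        ⟨InnerProductGeometry.angle_nonneg _ _, InnerProductGeometry.angle_le_pi _ _⟩
      have h2 : Real.arccos (-(1 / (d:ℝ))) ∈ Set.Icc 0 Real.pi :=
        ⟨Real.arccos_nonneg _, Real.arccos_le_pi _⟩
      have := Real.strictAntiOn_cos h1 h2 hlt
      rwa [Real.cos_arccos harange.1 harange.2] at this
    have hinner := InnerProductGeometry.cos_angle_mul_norm_mul_norm (v i) (v j)
    rw [← hinner]
    have hnn : (0:ℝ) < ‖v i‖ * ‖v j‖ := mul_pos (hvnorm i) (hvnorm j)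
    exact (mul_lt_mul_of_pos_right hcoslt hnn)
  -- the sum of weighted vectors is zero
  have hzero : (∑ i, w i • v i) = 0 := by
    have h1 : ∑ i, w i • v i = (∑ i, w i • z i) - (∑ i, w i) • a := by
      rw [Finset.sum_smul, ← Finset.sum_sub_distrib]
      refine Finset.sum_congr rfl fun i _ => ?_
      rw [hv]; exact smul_sub _ _ _
    rw [h1, hw1, one_smul, sub_eq_zero]
    exact hzw
  -- expand the quadratic form
  have hexp : ∑ i, ∑ j, (w i * w j) * inner ℝ (v i) (v j) = (0:ℝ) := by
    have h : (inner ℝ (∑ i, w i • v i) (∑ j, w j • v j) : ℝ)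
        = ∑ i, ∑ j, (w i * w j) * inner ℝ (v i) (v j) := by
      rw [sum_inner]
      refine Finset.sum_congr rfl fun i _ => ?_
      rw [real_inner_smul_left, inner_sum, Finset.mul_sum]
      refine Finset.sum_congr rfl fun j _ => ?_
      rw [real_inner_smul_right]; ring
    rw [hzero] at h
    simpa using h.symm
  set t : ι → ℝ := fun i => w i * ‖v i‖ with htdef
  have htpos : ∀ i, 0 < t i := fun i => mul_pos (hwpos i) (hvnorm i)
  -- splitting double sums into diagonal and off-diagonal
  have hsplit : ∀ f : ι → ι → ℝ, (∑ i, ∑ j, f i j)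
      = (∑ i, f i i) + ∑ p ∈ (Finset.univ : Finset ι).offDiag, f p.1 p.2 := by
    intro f
    rw [← Finset.sum_product', ← Finset.diag_union_offDiag,
      Finset.sum_union (Finset.disjoint_diag_offDiag _), Finset.sum_diag]
  have hdiag : ∀ i, (w i * w i) * inner ℝ (v i) (v i) = t i ^ 2 := by
    intro i
    rw [real_inner_self_eq_norm_mul_norm, htdef]; ring
  set S := ∑ i, t i ^ 2 with hSdef
  have hSpos : 0 < S := Finset.sum_pos (fun i _ => pow_pos (htpos i) 2)
    Finset.univ_nonempty
  -- sum over off-diagonal of t i * t j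
  have hP : ∑ p ∈ (Finset.univ : Finset ι).offDiag, t p.1 * t p.2
      = (∑ i, t i) ^ 2 - S := by
    have h1 : (∑ i, t i) ^ 2 = ∑ i, ∑ j, t i * t j := by
      rw [sq, Finset.sum_mul_sum]
    rw [h1, hsplit (fun i j => t i * t j)]
    have : ∀ i : ι, t i * t i = t i ^ 2 := fun i => (sq (t i)).symm
    simp only [this, hSdef]
    ring
  have hPle : ∑ p ∈ (Finset.univ : Finset ι).offDiag, t p.1 * t p.2 ≤ (d:ℝ) * S := by
    rw [hP]
    have h1 : (∑ i, t i) ^ 2 ≤ (Fintype.card ι : ℝ) * S := by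
      have := sq_sum_le_card_mul_sum_sq (s := (Finset.univ : Finset ι)) (f := t)
      simpa [Finset.card_univ, hSdef] using this
    have h2 : (Fintype.card ι : ℝ) ≤ (d:ℝ) + 1 := by exact_mod_cast hcard
    nlinarith [hSpos]
  -- main contradiction
  rw [hsplit] at hexp
  simp only [hdiag] at hexp
  rcases Finset.eq_empty_or_nonempty ((Finset.univ : Finset ι).offDiag) with hOD | hOD
  · rw [hOD] at hexp
    simp only [Finset.sum_empty, add_zero, ← hSdef] at hexp
    linarith
  · have hlt : ∑ p ∈ (Finset.univ : Finset ι).offDiag,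
        (-(1 / (d:ℝ)) * (t p.1 * t p.2))
        < ∑ p ∈ (Finset.univ : Finset ι).offDiag,
        (w p.1 * w p.2) * inner ℝ (v p.1) (v p.2) := by
      apply Finset.sum_lt_sum_of_nonempty hOD
      intro p _
      have h := hcos p.1 p.2
      have hww : 0 < w p.1 * w p.2 := mul_pos (hwpos p.1) (hwpos p.2)
      have := mul_lt_mul_of_pos_left h hww
      calc -(1 / (d:ℝ)) * (t p.1 * t p.2)
          = (w p.1 * w p.2) * (-(1 / (d:ℝ)) * (‖v p.1‖ * ‖v p.2‖)) := by
            simp only [htdef]; ring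
        _ < (w p.1 * w p.2) * inner ℝ (v p.1) (v p.2) := this
    have hsum : ∑ p ∈ (Finset.univ : Finset ι).offDiag,
        (-(1 / (d:ℝ)) * (t p.1 * t p.2))
        = -(1 / (d:ℝ)) * ∑ p ∈ (Finset.univ : Finset ι).offDiag, t p.1 * t p.2 := by
      rw [Finset.mul_sum]
    rw [hsum] at hlt
    have hbound : -(1 / (d:ℝ)) * ((d:ℝ) * S)
        ≤ -(1 / (d:ℝ)) * ∑ p ∈ (Finset.univ : Finset ι).offDiag, t p.1 * t p.2 := by
      apply mul_le_mul_of_nonpos_left hPle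
      have : (0:ℝ) < 1 / (d:ℝ) := by positivity
      linarith
    have hfin : -(1 / (d:ℝ)) * ((d:ℝ) * S) = -S := by
      field_simp
    rw [hfin] at hbound
    rw [← hSdef] at hexp
    linarith
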